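/- arXiv:1808.00087 — 10 statements merged into one kernel-verified Lean document; each statement's English description precedes it below -/
import Mathlib

section
/- Let p and q be probability measures on a measurable space with p absolutely continuous with respect to q, let γ ∈ (0,1), and let α ≥ 2 be an integer such that ∫ (dp/dq)^j dq < ∞ for every integer 2 ≤ j ≤ α. Then ∫ ( d((1−γ)q + γp)/dq )^α dq = (1−γ)^α · ( 1 + α·γ/(1−γ) + Σ_{j=2}^{α} C(α,j)·(γ/(1−γ))^j · ∫ (dp/dq)^j dq ). Consequently, D_α((1−γ)q + γp ‖ q) = (α/(α−1))·log(1−γ) + (1/(α−1))·log( 1 + α·γ/(1−γ) + Σ_{j=2}^{α} C(α,j)·(γ/(1−γ))^j · e^{(j−1)·D_j(p‖q)} ). -/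
open MeasureTheory ProbabilityTheory ENNReal Real

/-- Rényi divergence of order `a`:
`D_a(p‖q) = (a-1)⁻¹ · log ∫ (dp/dq)^a dq`, valued in the extended reals. -/
noncomputable def renyiDiv {Θ : Type*} [MeasurableSpace Θ]
    (p q : Measure Θ) (a : ℝ) : EReal :=
  (((a - 1)⁻¹ : ℝ) : EReal) * ENNReal.log (∫⁻ θ, p.rnDeriv q θ ^ a ∂q)

/-- **Lower bound computation (Proposition 2)**: exact binomial expansion of the moment
`∫ (d((1−γ)q+γp)/dq)^α dq` of a mixture with respect to its base measure, and the resulting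
exact expression for the Rényi divergence `D_α((1−γ)q + γp ‖ q)`. -/
theorem lintegral_rnDeriv_mixture_pow_eq
    {Θ : Type*} [MeasurableSpace Θ]
    (p q : Measure Θ) [IsProbabilityMeasure p] [IsProbabilityMeasure q]
    (hpq : p ≪ q) (γ : ℝ) (hγ0 : 0 < γ) (hγ1 : γ < 1)
    (α : ℕ) (hα : 2 ≤ α)
    (hfin : ∀ j : ℕ, 2 ≤ j → j ≤ α → ∫⁻ θ, p.rnDeriv q θ ^ (j : ℝ) ∂q < ∞) :
    (∫⁻ θ, (ENNReal.ofReal (1 - γ) • q + ENNReal.ofReal γ • p).rnDeriv q θ ^ (α : ℝ) ∂q =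
      ENNReal.ofReal ((1 - γ) ^ α) *
        (1 + ENNReal.ofReal ((α : ℝ) * γ / (1 - γ)) +
          ∑ j ∈ Finset.Icc 2 α, (α.choose j : ℝ≥0∞) * ENNReal.ofReal ((γ / (1 - γ)) ^ j) *
            ∫⁻ θ, p.rnDeriv q θ ^ (j : ℝ) ∂q)) ∧
    renyiDiv (ENNReal.ofReal (1 - γ) • q + ENNReal.ofReal γ • p) q (α : ℝ) =
      (↑((α : ℝ) / ((α : ℝ) - 1) * Real.log (1 - γ) +
        ((α : ℝ) - 1)⁻¹ * Real.log (1 + (α : ℝ) * γ / (1 - γ) +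
          ∑ j ∈ Finset.Icc 2 α, (α.choose j : ℝ) * (γ / (1 - γ)) ^ j *
            (EReal.exp (((((j : ℝ) - 1) : ℝ) : EReal) * renyiDiv p q (j : ℝ))).toReal)) :
        EReal) := by
  have part1 : ∫⁻ θ, (ENNReal.ofReal (1 - γ) • q + ENNReal.ofReal γ • p).rnDeriv q θ
        ^ (α : ℝ) ∂q =
      ENNReal.ofReal ((1 - γ) ^ α) *
        (1 + ENNReal.ofReal ((α : ℝ) * γ / (1 - γ)) +
          ∑ j ∈ Finset.Icc 2 α, (α.choose j : ℝ≥0∞) * ENNReal.ofReal ((γ / (1 - γ)) ^ j) *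
            ∫⁻ θ, p.rnDeriv q θ ^ (j : ℝ) ∂q) := by
    have h1γ : (0:ℝ) < 1 - γ := by linarith
    set f := p.rnDeriv q with hfdef
    have hfm : Measurable f := p.measurable_rnDeriv q
    set a : ℝ≥0∞ := ENNReal.ofReal (1 - γ) with hadef
    set b : ℝ≥0∞ := ENNReal.ofReal γ with hbdef
    have hmix : (a • q + b • p).rnDeriv q =ᵐ[q] fun θ => a + b * f θ := by
      haveI : IsFiniteMeasure (a • q) := by
        constructor; rw [Measure.smul_apply, smul_eq_mul]
        exact ENNReal.mul_lt_top ofReal_lt_top (measure_lt_top q _)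
      haveI : IsFiniteMeasure (b • p) := by
        constructor; rw [Measure.smul_apply, smul_eq_mul]
        exact ENNReal.mul_lt_top ofReal_lt_top (measure_lt_top p _)
      have h1 := Measure.rnDeriv_add' (a • q) (b • p) q
      have h2 := Measure.rnDeriv_smul_left_of_ne_top' q q (r := a) ofReal_ne_top
      have h3 := Measure.rnDeriv_smul_left_of_ne_top' p q (r := b) ofReal_ne_top
      have h4 := Measure.rnDeriv_self q
      filter_upwards [h1, h2, h3, h4] with θ e1 e2 e3 e4
      rw [e1, Pi.add_apply, e2, e3, Pi.smul_apply, Pi.smul_apply, e4, smul_eq_mul, smul_eq_mul,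
        mul_one]
    -- binomial expansion
    have step1 : ∫⁻ θ, (a • q + b • p).rnDeriv q θ ^ (α : ℝ) ∂q
        = ∑ k ∈ Finset.range (α + 1),
            (α.choose k : ℝ≥0∞) * a ^ (α - k) * b ^ k * ∫⁻ θ, f θ ^ k ∂q := by
      have : ∫⁻ θ, (a • q + b • p).rnDeriv q θ ^ (α : ℝ) ∂q
          = ∫⁻ θ, (a + b * f θ) ^ α ∂q := by
        refine lintegral_congr_ae ?_
        filter_upwards [hmix] with θ e
        rw [e, ← ENNReal.rpow_natCast]
      rw [this]
      have expand : ∀ θ, (a + b * f θ) ^ α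
          = ∑ k ∈ Finset.range (α + 1),
              (α.choose k : ℝ≥0∞) * a ^ (α - k) * b ^ k * f θ ^ k := by
        intro θ
        rw [add_comm, add_pow]
        refine Finset.sum_congr rfl fun k _ => ?_
        rw [mul_pow]; ring
      simp_rw [expand]
      rw [lintegral_finset_sum]
      · refine Finset.sum_congr rfl fun k _ => ?_
        exact lintegral_const_mul' _ _ (by
          exact ENNReal.mul_ne_top (ENNReal.mul_ne_top (ENNReal.natCast_ne_top _)
            (ENNReal.pow_ne_top ofReal_ne_top)) (ENNReal.pow_ne_top ofReal_ne_top))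
      · intro k _
        exact (hfm.pow_const k).const_mul _
    have hM1 : ∫⁻ θ, f θ ^ (1:ℕ) ∂q = 1 := by
      simp only [pow_one]
      rw [Measure.lintegral_rnDeriv hpq]; simp
    have hM0 : ∫⁻ θ, f θ ^ (0:ℕ) ∂q = 1 := by simp
    have hsplit : Finset.range (α+1) = insert 0 (insert 1 (Finset.Icc 2 α)) := by
      ext x; simp only [Finset.mem_range, Finset.mem_insert, Finset.mem_Icc]; omega
    have Ea : a ^ α = ENNReal.ofReal ((1-γ)^α) := (ENNReal.ofReal_pow h1γ.le α).symm
    have hpow : ∀ j : ℕ, j ≤ α → (1-γ)^(α-j) * (1-γ)^j = (1-γ)^α := by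
      intro j hj; rw [← pow_add]; congr 1; omega
    have E1 : (α.choose 1 : ℝ≥0∞) * a ^ (α-1) * b ^ 1 * (∫⁻ θ, f θ ^ (1:ℕ) ∂q)
        = ENNReal.ofReal ((1-γ)^α) * ENNReal.ofReal ((α:ℝ)*γ/(1-γ)) := by
      rw [hM1, mul_one, Nat.choose_one_right, pow_one, hadef, hbdef,
        ← ENNReal.ofReal_natCast α, ← ENNReal.ofReal_pow h1γ.le,
        ← ENNReal.ofReal_mul (by positivity), ← ENNReal.ofReal_mul (by positivity),
        ← ENNReal.ofReal_mul (by positivity)]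
      congr 1
      have h1 := hpow 1 (by omega)
      field_simp
      linear_combination h1
    have Ej : ∀ j ∈ Finset.Icc 2 α,
        (α.choose j : ℝ≥0∞) * a^(α-j) * b^j * (∫⁻ θ, f θ ^ j ∂q)
        = ENNReal.ofReal ((1-γ)^α) * ((α.choose j : ℝ≥0∞) * ENNReal.ofReal ((γ/(1-γ))^j)
            * ∫⁻ θ, f θ ^ j ∂q) := by
      intro j hj
      rw [Finset.mem_Icc] at hj
      have S : a^(α-j) * b^j = ENNReal.ofReal ((1-γ)^α) * ENNReal.ofReal ((γ/(1-γ))^j) := by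
        rw [hadef, hbdef, ← ENNReal.ofReal_pow h1γ.le, ← ENNReal.ofReal_pow hγ0.le,
          ← ENNReal.ofReal_mul (by positivity), ← ENNReal.ofReal_mul (by positivity)]
        congr 1
        have h1 := hpow j hj.2
        rw [div_pow]
        field_simp
        linear_combination h1
      calc (α.choose j : ℝ≥0∞) * a^(α-j) * b^j * (∫⁻ θ, f θ ^ j ∂q)
          = (a^(α-j) * b^j) * ((α.choose j : ℝ≥0∞) * ∫⁻ θ, f θ ^ j ∂q) := by ring
        _ = (ENNReal.ofReal ((1-γ)^α) * ENNReal.ofReal ((γ/(1-γ))^j))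
              * ((α.choose j : ℝ≥0∞) * ∫⁻ θ, f θ ^ j ∂q) := by rw [S]
        _ = _ := by ring
    simp_rw [ENNReal.rpow_natCast]
    simp_rw [ENNReal.rpow_natCast] at step1
    rw [step1, hsplit, Finset.sum_insert (by simp), Finset.sum_insert (by simp),
      Finset.sum_congr rfl Ej, E1]
    simp only [Nat.choose_zero_right, Nat.cast_one, one_mul, pow_zero, mul_one,
      Nat.sub_zero, hM0, Ea, lintegral_one, measure_univ]
    rw [mul_add, mul_add, Finset.mul_sum]
    ring
  refine ⟨part1, ?_⟩
  have h1γ : (0:ℝ) < 1 - γ := by linarith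
  set M : ℕ → ℝ≥0∞ := fun j => ∫⁻ θ, p.rnDeriv q θ ^ (j : ℝ) ∂q with hM
  set S : ℝ≥0∞ := 1 + ENNReal.ofReal ((α : ℝ) * γ / (1 - γ)) +
      ∑ j ∈ Finset.Icc 2 α, (α.choose j : ℝ≥0∞) * ENNReal.ofReal ((γ / (1 - γ)) ^ j) * M j
    with hS
  have hS_ne_top : S ≠ ∞ := by
    rw [hS]
    refine (ENNReal.add_lt_top.2 ⟨ENNReal.add_lt_top.2 ⟨one_lt_top, ofReal_lt_top⟩, ?_⟩).ne
    refine ENNReal.sum_lt_top.2 fun j hj => ?_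
    rw [Finset.mem_Icc] at hj
    exact ENNReal.mul_lt_top (ENNReal.mul_lt_top (ENNReal.natCast_lt_top _) ofReal_lt_top)
      (hfin j hj.1 hj.2)
  have hS_one : (1:ℝ≥0∞) ≤ S := le_add_right le_self_add
  have hS_pos : 0 < S.toReal := ENNReal.toReal_pos (by intro h; simp [h] at hS_one) hS_ne_top
  have hT : ∀ j ∈ Finset.Icc 2 α,
      (EReal.exp (((((j:ℕ) : ℝ) - 1 : ℝ) : EReal) * renyiDiv p q (j : ℝ))).toReal
        = (M j).toReal := by
    intro j hj
    rw [Finset.mem_Icc] at hj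
    have hne : ((j:ℝ) - 1) ≠ 0 := by
      have : (2:ℝ) ≤ (j:ℝ) := by exact_mod_cast hj.1
      linarith
    rw [renyiDiv, ← mul_assoc, ← EReal.coe_mul, mul_inv_cancel₀ hne, EReal.coe_one, one_mul,
      ENNReal.exp_log]
  have hStoReal : S.toReal = 1 + (α : ℝ) * γ / (1 - γ) +
      ∑ j ∈ Finset.Icc 2 α, (α.choose j : ℝ) * (γ / (1 - γ)) ^ j * (M j).toReal := by
    rw [hS, ENNReal.toReal_add (by finiteness) (by
        refine (ENNReal.sum_lt_top.2 fun j hj => ?_).ne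
        rw [Finset.mem_Icc] at hj
        exact ENNReal.mul_lt_top (ENNReal.mul_lt_top (ENNReal.natCast_lt_top _) ofReal_lt_top)
          (hfin j hj.1 hj.2)),
      ENNReal.toReal_add (by finiteness) (by finiteness), ENNReal.toReal_sum (by
        intro j hj
        rw [Finset.mem_Icc] at hj
        exact (ENNReal.mul_lt_top (ENNReal.mul_lt_top (ENNReal.natCast_lt_top _) ofReal_lt_top)
          (hfin j hj.1 hj.2)).ne)]
    simp only [ENNReal.toReal_one, ENNReal.toReal_mul]
    rw [ENNReal.toReal_ofReal (by positivity)]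
    refine congrArg _ (Finset.sum_congr rfl fun j hj => ?_)
    rw [ENNReal.toReal_ofReal (by positivity)]
    simp
  rw [renyiDiv, part1]
  rw [ENNReal.log_mul_add, ENNReal.log_ofReal_of_pos (by positivity)]
  have hlogS : ENNReal.log S = ((Real.log S.toReal : ℝ) : EReal) := by
    conv_lhs => rw [← ENNReal.ofReal_toReal hS_ne_top]
    rw [ENNReal.log_ofReal_of_pos hS_pos]
  rw [hlogS, ← EReal.coe_add, ← EReal.coe_mul]
  rw [show (1 + (α : ℝ) * γ / (1 - γ) +
      ∑ j ∈ Finset.Icc 2 α, (α.choose j : ℝ) * (γ / (1 - γ)) ^ j *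
        (EReal.exp (((((j:ℕ) : ℝ) - 1 : ℝ) : EReal) * renyiDiv p q (j : ℝ))).toReal)
      = S.toReal by rw [hStoReal]; exact congrArg _ (Finset.sum_congr rfl fun j hj => by
        rw [hT j hj])]
  rw [EReal.coe_eq_coe_iff, Real.log_pow]
  have hαne : ((α:ℝ) - 1) ≠ 0 := by
    have : (2:ℝ) ≤ (α:ℝ) := by exact_mod_cast hα
    linarith
  field_simp
end

section
/- Let p and q be probability measures on a measurable space with p absolutely continuous with respect to q, and define K(λ) = log ∫ (dp/dq)^{λ+1} dq for λ ≥ 0. Then for every real λ ≥ 0 such that K(⌈λ⌉) is finite, K(λ) ≤ (1 − λ + ⌊λ⌋)·K(⌊λ⌋) + (λ − ⌊λ⌋)·K(⌈λ⌉), where ⌊·⌋ and ⌈·⌉ denote the floor and ceiling functions. -/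
open MeasureTheory ProbabilityTheory ENNReal Real

/-- **Piecewise-linear interpolation bound for the CGF (Corollary 1)**: the cumulant
generating function `K(λ) = log ∫ (dp/dq)^{λ+1} dq` of the privacy loss random variable
lies below the linear interpolation of its values at `⌊λ⌋` and `⌈λ⌉`. -/
theorem cgf_le_interpolation
    {Θ : Type*} [MeasurableSpace Θ]
    (p q : Measure Θ) [IsProbabilityMeasure p] [IsProbabilityMeasure q] (hpq : p ≪ q)
    (K : ℝ → EReal)
    (hK : ∀ lam : ℝ, K lam = ENNReal.log (∫⁻ θ, p.rnDeriv q θ ^ (lam + 1) ∂q))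
    (lam : ℝ) (hlam : 0 ≤ lam)
    (hfin : ⊥ < K ((⌈lam⌉ : ℤ) : ℝ) ∧ K ((⌈lam⌉ : ℤ) : ℝ) < ⊤) :
    K lam ≤ (↑(1 - lam + ((⌊lam⌋ : ℤ) : ℝ)) : EReal) * K (((⌊lam⌋ : ℤ) : ℝ)) +
      (↑(lam - ((⌊lam⌋ : ℤ) : ℝ)) : EReal) * K (((⌈lam⌉ : ℤ) : ℝ)) := by
  by_cases hint : ((⌊lam⌋ : ℤ) : ℝ) = lam
  · -- integer case: floor = ceil = lam
    have hceil : (⌈lam⌉ : ℤ) = ⌊lam⌋ := by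
      rw [← hint, Int.ceil_intCast]
      exact (Int.floor_intCast _).symm
    have h1 : (1 - lam + ((⌊lam⌋ : ℤ) : ℝ)) = 1 := by rw [hint]; ring
    have h0 : (lam - ((⌊lam⌋ : ℤ) : ℝ)) = 0 := by rw [hint]; ring
    rw [h1, h0, hceil, hint]
    simp
  · -- non-integer case
    set f := p.rnDeriv q with hf_def
    have hf : Measurable f := Measure.measurable_rnDeriv p q
    set n : ℤ := ⌊lam⌋ with hn
    have hn0 : (0:ℝ) ≤ (n:ℝ) := by
      exact_mod_cast Int.floor_nonneg.mpr hlam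
    have hceil : (⌈lam⌉ : ℤ) = n + 1 := by
      have h1 : ⌈lam⌉ ≤ n + 1 := Int.ceil_le.mpr (by push_cast; exact (Int.lt_floor_add_one lam).le)
      have h2 : n < ⌈lam⌉ := by
        have : (n:ℝ) < lam := lt_of_le_of_ne (Int.floor_le lam) hint
        exact_mod_cast this.trans_le (Int.le_ceil lam)
      omega
    set t : ℝ := lam - n with ht_def
    have ht0 : 0 < t := by
      have : (n:ℝ) < lam := lt_of_le_of_ne (Int.floor_le lam) hint
      dsimp [t]; linarith
    have ht1 : t < 1 := by
      have := Int.lt_floor_add_one lam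
      rw [← hn] at this
      dsimp [t]; push_cast at this ⊢; linarith
    -- Hölder's inequality
    have hconj : (1/(1-t)).HolderConjugate (1/t) := by
      rw [Real.holderConjugate_iff]; constructor
      · rw [lt_div_iff₀ (by linarith)]; linarith
      · rw [one_div, one_div, inv_inv, inv_inv]; ring
    have key : (∫⁻ θ, f θ ^ (lam + 1) ∂q) ≤
        (∫⁻ θ, f θ ^ ((n:ℝ) + 1) ∂q) ^ (1 - t) * (∫⁻ θ, f θ ^ ((n:ℝ) + 2) ∂q) ^ t := by
      have H := ENNReal.lintegral_mul_le_Lp_mul_Lq q hconj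
        (f := fun θ => f θ ^ ((1 - t) * ((n:ℝ) + 1)))
        (g := fun θ => f θ ^ (t * ((n:ℝ) + 2)))
        ((hf.pow_const _).aemeasurable) ((hf.pow_const _).aemeasurable)
      have e1 : ∀ θ, ((fun θ => f θ ^ ((1 - t) * ((n:ℝ) + 1))) *
          (fun θ => f θ ^ (t * ((n:ℝ) + 2)))) θ = f θ ^ (lam + 1) := by
        intro θ
        simp only [Pi.mul_apply]
        rw [← ENNReal.rpow_add_of_nonneg _ _ (by nlinarith) (by nlinarith)]
        congr 1
        dsimp [t]; ring
      have e2 : ∀ θ, (f θ ^ ((1 - t) * ((n:ℝ) + 1))) ^ (1/(1-t)) = f θ ^ ((n:ℝ) + 1) := by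
        intro θ
        rw [← ENNReal.rpow_mul]
        congr 1
        have h : (1:ℝ) - t ≠ 0 := by linarith
        field_simp
      have e3 : ∀ θ, (f θ ^ (t * ((n:ℝ) + 2))) ^ (1/t) = f θ ^ ((n:ℝ) + 2) := by
        intro θ
        rw [← ENNReal.rpow_mul]
        congr 1
        have h : t ≠ 0 := ne_of_gt ht0
        field_simp
      have d1 : (1 : ℝ) / (1/(1-t)) = 1 - t := by
        rw [one_div_one_div]
      have d2 : (1 : ℝ) / (1/t) = t := by
        rw [one_div_one_div]
      calc (∫⁻ θ, f θ ^ (lam + 1) ∂q)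
          = ∫⁻ θ, ((fun θ => f θ ^ ((1 - t) * ((n:ℝ) + 1))) *
              (fun θ => f θ ^ (t * ((n:ℝ) + 2)))) θ ∂q := by
            refine lintegral_congr fun θ => (e1 θ).symm
        _ ≤ (∫⁻ θ, (f θ ^ ((1 - t) * ((n:ℝ) + 1))) ^ (1/(1-t)) ∂q) ^ ((1:ℝ)/(1/(1-t))) *
              (∫⁻ θ, (f θ ^ (t * ((n:ℝ) + 2))) ^ (1/t) ∂q) ^ ((1:ℝ)/(1/t)) := H
        _ = (∫⁻ θ, f θ ^ ((n:ℝ) + 1) ∂q) ^ (1 - t) * (∫⁻ θ, f θ ^ ((n:ℝ) + 2) ∂q) ^ t := by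
            rw [d1, d2]
            congr 1
            · congr 1; exact lintegral_congr fun θ => e2 θ
            · congr 1; exact lintegral_congr fun θ => e3 θ
    -- take logs
    have hlog := ENNReal.log_monotone key
    rw [ENNReal.log_mul_add, ENNReal.log_rpow, ENNReal.log_rpow] at hlog
    have hKlam : K lam = ENNReal.log (∫⁻ θ, f θ ^ (lam + 1) ∂q) := hK lam
    have hKn : K ((n:ℤ):ℝ) = ENNReal.log (∫⁻ θ, f θ ^ ((n:ℝ) + 1) ∂q) := hK (n:ℝ)
    have hKc : K ((⌈lam⌉:ℤ):ℝ) = ENNReal.log (∫⁻ θ, f θ ^ ((n:ℝ) + 2) ∂q) := by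
      rw [hK ((⌈lam⌉:ℤ):ℝ), hceil]
      norm_num
      ring_nf
    have hc1 : (1 - lam + ((⌊lam⌋ : ℤ) : ℝ)) = 1 - t := by dsimp [t]; ring
    have hc2 : (lam - ((⌊lam⌋ : ℤ) : ℝ)) = t := rfl
    rw [hKlam, hc1, hKn, hKc]
    exact hlog
end

section
/- For every real number j > 1, the bivariate function f(x,y) = x^j / y^{j−1} is jointly convex on the open positive quadrant {(x,y) ∈ ℝ² : x > 0, y > 0}. -/
open Real

private lemma aux_eq {x y j : ℝ} (hx : 0 < x) (hy : 0 < y) :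
    x ^ j / y ^ (j - 1) = y * (x / y) ^ j := by
  rw [Real.div_rpow hx.le hy.le, Real.rpow_sub hy, Real.rpow_one]
  have h1 : y ^ j ≠ 0 := (Real.rpow_pos_of_pos hy j).ne'
  field_simp

/-- **Joint convexity of `(x,y) ↦ x^j / y^{j−1}` (Lemma 7)**: for every real `j > 1`,
the function is jointly convex on the open positive quadrant. -/
theorem convexOn_pow_div_pow (j : ℝ) (hj : 1 < j) :
    ConvexOn ℝ {pt : ℝ × ℝ | 0 < pt.1 ∧ 0 < pt.2}
      (fun pt : ℝ × ℝ => pt.1 ^ j / pt.2 ^ (j - 1)) := by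
  have hconv : ConvexOn ℝ (Set.Ici 0) fun x : ℝ => x ^ j := convexOn_rpow hj.le
  refine ⟨((convex_Ioi (0:ℝ)).prod (convex_Ioi 0)), ?_⟩
  rintro ⟨x₁, y₁⟩ ⟨hx₁, hy₁⟩ ⟨x₂, y₂⟩ ⟨hx₂, hy₂⟩ a b ha hb hab
  simp only [smul_eq_mul, Prod.mk_add_mk, Prod.smul_mk] at *
  have hXpos : 0 < a * x₁ + b * x₂ := by
    have := convex_Ioi (0:ℝ) hx₁ hx₂ ha hb hab
    simpa using this
  have hYpos : 0 < a * y₁ + b * y₂ := by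
    have := convex_Ioi (0:ℝ) hy₁ hy₂ ha hb hab
    simpa using this
  set X := a * x₁ + b * x₂ with hX
  set Y := a * y₁ + b * y₂ with hY
  set u := a * y₁ / Y with hu
  set v := b * y₂ / Y with hv
  have hu0 : 0 ≤ u := by positivity
  have hv0 : 0 ≤ v := by positivity
  have huv : u + v = 1 := by
    rw [hu, hv, ← add_div, hY, div_self hYpos.ne']
  have hcomb : u * (x₁ / y₁) + v * (x₂ / y₂) = X / Y := by
    rw [hu, hv]
    field_simp
    ring
  have key : (X / Y) ^ j ≤ u * (x₁ / y₁) ^ j + v * (x₂ / y₂) ^ j := by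
    have := hconv.2 (Set.mem_Ici.mpr (by positivity : (0:ℝ) ≤ x₁ / y₁))
      (Set.mem_Ici.mpr (by positivity : (0:ℝ) ≤ x₂ / y₂)) hu0 hv0 huv
    simpa [smul_eq_mul, hcomb] using this
  have e : X ^ j / Y ^ (j - 1) = Y * (X / Y) ^ j := aux_eq hXpos hYpos
  have e1 : x₁ ^ j / y₁ ^ (j - 1) = y₁ * (x₁ / y₁) ^ j := aux_eq hx₁ hy₁
  have e2 : x₂ ^ j / y₂ ^ (j - 1) = y₂ * (x₂ / y₂) ^ j := aux_eq hx₂ hy₂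
  calc X ^ j / Y ^ (j - 1) = Y * (X / Y) ^ j := e
    _ ≤ Y * (u * (x₁ / y₁) ^ j + v * (x₂ / y₂) ^ j) := by
        exact mul_le_mul_of_nonneg_left key hYpos.le
    _ = a * (y₁ * (x₁ / y₁) ^ j) + b * (y₂ * (x₂ / y₂) ^ j) := by
        rw [hu, hv]; field_simp
    _ = a * (x₁ ^ j / y₁ ^ (j - 1)) + b * (x₂ ^ j / y₂ ^ (j - 1)) := by
        rw [e1, e2]
end

section
/- Let μ be a σ-finite measure on a measurable space Θ, let I be a finite index set with weights w_i ≥ 0 summing to 1, and for each i ∈ I let p_i, q_i, r_i : Θ → [0,∞) be measurable functions with r_i(θ) > 0 for μ-almost every θ. Then for every integer j ≥ 1: ∫ | Σ_{i∈I} w_i·(p_i(θ) − q_i(θ)) |^j / ( Σ_{i∈I} w_i·r_i(θ) )^{j−1} dμ(θ) ≤ Σ_{i∈I} w_i · ∫ |p_i(θ) − q_i(θ)|^j / r_i(θ)^{j−1} dμ(θ), with integrals taken in the extended nonnegative reals. -/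
open MeasureTheory ENNReal Real

private lemma convexOn_abs_pow' (j : ℕ) :
    ConvexOn ℝ Set.univ fun x : ℝ => |x| ^ j := by
  refine ⟨convex_univ, fun x _ y _ a b ha hb hab => ?_⟩
  have h1 : |a • x + b • y| ≤ a * |x| + b * |y| := by
    refine (abs_add_le _ _).trans ?_
    simp only [smul_eq_mul, abs_mul, abs_of_nonneg ha, abs_of_nonneg hb, le_refl]
  have h2 := (convexOn_pow (𝕜 := ℝ) j).2 (Set.mem_Ici.2 (abs_nonneg x))
    (Set.mem_Ici.2 (abs_nonneg y)) ha hb hab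
  simp only [smul_eq_mul] at h1 h2 ⊢
  calc |a • x + b • y| ^ j ≤ (a * |x| + b * |y|) ^ j := by
        exact pow_le_pow_left₀ (abs_nonneg _) (by simpa using h1) j
    _ ≤ a * |x| ^ j + b * |y| ^ j := h2

private lemma radon_aux {ι : Type*} (I : Finset ι) (w x y : ι → ℝ)
    (hw : ∀ i ∈ I, 0 ≤ w i) (hw1 : ∑ i ∈ I, w i = 1)
    (hy : ∀ i ∈ I, 0 < y i) (j : ℕ) (hj : 1 ≤ j) :
    |∑ i ∈ I, w i * x i| ^ j / (∑ i ∈ I, w i * y i) ^ (j - 1) ≤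
      ∑ i ∈ I, w i * (|x i| ^ j / y i ^ (j - 1)) := by
  set S : ℝ := ∑ i ∈ I, w i * y i with hS
  have hSnn : ∀ i ∈ I, 0 ≤ w i * y i := fun i hi =>
    mul_nonneg (hw i hi) (hy i hi).le
  have hSpos : 0 < S := by
    obtain ⟨i, hi, hwi⟩ : ∃ i ∈ I, w i ≠ 0 := by
      by_contra h
      push_neg at h
      have : (∑ i ∈ I, w i) = 0 := Finset.sum_eq_zero h
      rw [hw1] at this; norm_num at this
    have : 0 < w i * y i :=
      mul_pos (lt_of_le_of_ne (hw i hi) (Ne.symm hwi)) (hy i hi)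
    exact lt_of_lt_of_le this (Finset.single_le_sum hSnn hi)
  -- Jensen with weights a i = w i * y i / S and points x i / y i
  have ha0 : ∀ i ∈ I, 0 ≤ w i * y i / S := fun i hi =>
    div_nonneg (hSnn i hi) hSpos.le
  have ha1 : ∑ i ∈ I, w i * y i / S = 1 := by
    rw [← Finset.sum_div, ← hS, div_self hSpos.ne']
  have hmem : ∀ i ∈ I, x i / y i ∈ (Set.univ : Set ℝ) := fun _ _ => Set.mem_univ _
  have hJ := (convexOn_abs_pow' j).map_sum_le ha0 ha1 hmem
  simp only [smul_eq_mul] at hJ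
  have hsum1 : ∑ i ∈ I, w i * y i / S * (x i / y i) = (∑ i ∈ I, w i * x i) / S := by
    rw [Finset.sum_div]
    refine Finset.sum_congr rfl fun i hi => ?_
    have h1 : S ≠ 0 := hSpos.ne'
    have h2 : y i ≠ 0 := (hy i hi).ne'
    field_simp
  have hsum2 : ∑ i ∈ I, w i * y i / S * |x i / y i| ^ j =
      (∑ i ∈ I, w i * (|x i| ^ j / y i ^ (j - 1))) / S := by
    rw [Finset.sum_div]
    refine Finset.sum_congr rfl fun i hi => ?_
    have hyi := hy i hi
    have hyj : y i ^ j = y i ^ (j - 1) * y i := by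
      conv_lhs => rw [show j = (j - 1) + 1 by omega]
      rw [pow_succ]
    have h1 : S ≠ 0 := hSpos.ne'
    have h2 : y i ≠ 0 := hyi.ne'
    rw [abs_div, abs_of_pos hyi, div_pow, hyj]
    field_simp
  rw [hsum1, hsum2, abs_div, abs_of_pos hSpos, div_pow] at hJ
  -- hJ : |∑ w x|^j / S^j ≤ (∑ ...) / S
  have hmul := mul_le_mul_of_nonneg_right hJ hSpos.le
  have hSj : S ^ j = S ^ (j - 1) * S := by
    conv_lhs => rw [show j = (j - 1) + 1 by omega]
    rw [pow_succ]
  rw [hSj, div_mul_cancel₀ _ hSpos.ne'] at hmul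
  calc |∑ i ∈ I, w i * x i| ^ j / S ^ (j - 1)
      = |∑ i ∈ I, w i * x i| ^ j / (S ^ (j - 1) * S) * S := by
        field_simp
    _ ≤ _ := hmul

/-- **Mixture inequality for the ternary Pearson–Vajda integrand (Jensen step of the
subsampling lemma)**: the divergence of a finite mixture with weights `w` is bounded by
the mixture of the divergences. -/
theorem lintegral_mixture_chi_le
    {Θ : Type*} [MeasurableSpace Θ] (μ : Measure Θ) [SigmaFinite μ]
    {ι : Type*} (I : Finset ι) (w : ι → ℝ)
    (hw0 : ∀ i ∈ I, 0 ≤ w i) (hw1 : ∑ i ∈ I, w i = 1)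
    (p q r : ι → Θ → ℝ)
    (hpm : ∀ i ∈ I, Measurable (p i)) (hqm : ∀ i ∈ I, Measurable (q i))
    (hrm : ∀ i ∈ I, Measurable (r i))
    (hpnn : ∀ i ∈ I, ∀ θ, 0 ≤ p i θ) (hqnn : ∀ i ∈ I, ∀ θ, 0 ≤ q i θ)
    (hrpos : ∀ i ∈ I, ∀ᵐ θ ∂μ, 0 < r i θ)
    (j : ℕ) (hj : 1 ≤ j) :
    ∫⁻ θ, ENNReal.ofReal
        (|∑ i ∈ I, w i * (p i θ - q i θ)| ^ j / (∑ i ∈ I, w i * r i θ) ^ (j - 1)) ∂μ ≤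
      ∑ i ∈ I, ENNReal.ofReal (w i) *
        ∫⁻ θ, ENNReal.ofReal (|p i θ - q i θ| ^ j / r i θ ^ (j - 1)) ∂μ := by
  have hgm : ∀ i ∈ I, Measurable fun θ =>
      ENNReal.ofReal (w i * (|p i θ - q i θ| ^ j / r i θ ^ (j - 1))) := by
    intro i hi
    exact (measurable_const.mul
      ((((hpm i hi).sub (hqm i hi)).abs.pow_const j).div
        ((hrm i hi).pow_const (j - 1)))).ennreal_ofReal
  have hae : ∀ᵐ θ ∂μ, ∀ i ∈ I, 0 < r i θ := (Filter.eventually_all_finset I).2 hrpos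
  calc ∫⁻ θ, ENNReal.ofReal
        (|∑ i ∈ I, w i * (p i θ - q i θ)| ^ j / (∑ i ∈ I, w i * r i θ) ^ (j - 1)) ∂μ
      ≤ ∫⁻ θ, ∑ i ∈ I, ENNReal.ofReal
          (w i * (|p i θ - q i θ| ^ j / r i θ ^ (j - 1))) ∂μ := by
        refine lintegral_mono_ae ?_
        filter_upwards [hae] with θ hθ
        have h1 := radon_aux I w (fun i => p i θ - q i θ) (fun i => r i θ)
          hw0 hw1 (fun i hi => hθ i hi) j hj
        refine le_trans (ENNReal.ofReal_le_ofReal h1) ?_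
        rw [ENNReal.ofReal_sum_of_nonneg]
        intro i hi
        exact mul_nonneg (hw0 i hi) (div_nonneg (pow_nonneg (abs_nonneg _) j) (pow_nonneg (hθ i hi).le _))
    _ = ∑ i ∈ I, ∫⁻ θ, ENNReal.ofReal
          (w i * (|p i θ - q i θ| ^ j / r i θ ^ (j - 1))) ∂μ :=
        lintegral_finset_sum I hgm
    _ = ∑ i ∈ I, ENNReal.ofReal (w i) *
          ∫⁻ θ, ENNReal.ofReal (|p i θ - q i θ| ^ j / r i θ ^ (j - 1)) ∂μ := by
        refine Finset.sum_congr rfl fun i hi => ?_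
        have : ∀ θ, ENNReal.ofReal (w i * (|p i θ - q i θ| ^ j / r i θ ^ (j - 1))) =
            ENNReal.ofReal (w i) *
              ENNReal.ofReal (|p i θ - q i θ| ^ j / r i θ ^ (j - 1)) := fun θ =>
          ENNReal.ofReal_mul (hw0 i hi)
        simp_rw [this]
        exact lintegral_const_mul _
          ((((hpm i hi).sub (hqm i hi)).abs.pow_const j).div
            ((hrm i hi).pow_const (j - 1))).ennreal_ofReal
end

section
/- Let p, q, r be probability measures on a measurable space that are pairwise mutually absolutely continuous. Then for every integer α ≥ 1: D_{|χ|^α}(p, q ‖ r) ≤ D_{|χ|^α}(p‖r) + D_{|χ|^α}(p‖q) + D_{|χ|^α}(q‖r) + D_{|χ|^α}(q‖p). In particular, if a mechanism's binary Pearson–Vajda divergences of order α over neighboring inputs are bounded by ξ^α, then its ternary Pearson–Vajda divergences of order α over mutually adjacent triples are bounded by 4·ξ^α. -/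
open MeasureTheory ENNReal Real

/-- Binary Pearson–Vajda divergence `D_{|χ|^α}(p‖q) = ∫ |dp/dq − 1|^α dq`. -/
noncomputable def binaryChi {Θ : Type*} [MeasurableSpace Θ]
    (p q : Measure Θ) (α : ℕ) : ℝ≥0∞ :=
  ∫⁻ θ, (max (p.rnDeriv q θ - 1) (1 - p.rnDeriv q θ)) ^ α ∂q

/-- Ternary Pearson–Vajda divergence `D_{|χ|^α}(p,q‖r) = ∫ |dp/dr − dq/dr|^α dr`. -/
noncomputable def ternaryChi {Θ : Type*} [MeasurableSpace Θ]
    (p q r : Measure Θ) (α : ℕ) : ℝ≥0∞ :=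
  ∫⁻ θ, (max (p.rnDeriv r θ - q.rnDeriv r θ) (q.rnDeriv r θ - p.rnDeriv r θ)) ^ α ∂r

private lemma key_asym (α : ℕ) (hα : 1 ≤ α) (a b c : ℝ≥0∞) (hb : b ≠ ∞) (hc : c * b = a)
    (hba : b ≤ a) :
    (a - b) ^ α ≤ (max (a - 1) (1 - a)) ^ α + b * (max (c - 1) (1 - c)) ^ α
      + (max (b - 1) (1 - b)) ^ α := by
  rcases le_or_gt 1 b with h1b | hb1
  · -- both ≥ 1 : a - b ≤ a - 1
    have h : (a - b) ^ α ≤ (max (a - 1) (1 - a)) ^ α :=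
      pow_le_pow_left' (le_trans (tsub_le_tsub_left h1b a) (le_max_left _ _)) _
    exact h.trans (le_trans (self_le_add_right _ _) (self_le_add_right _ _))
  · rcases le_or_gt a 1 with ha1 | h1a
    · -- both ≤ 1 : a - b ≤ 1 - b
      have h : (a - b) ^ α ≤ (max (b - 1) (1 - b)) ^ α :=
        pow_le_pow_left' (le_trans (tsub_le_tsub_right ha1 b) (le_max_right _ _)) _
      exact h.trans (self_le_add_left _ _)
    · -- b ≤ 1 ≤ a : use the middle term
      have hc1 : 1 ≤ c := by
        by_contra hlt
        push_neg at hlt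
        have : a ≤ b := by
          calc a = c * b := hc.symm
          _ ≤ 1 * b := mul_le_mul_left hlt.le b
          _ = b := one_mul b
        exact absurd (this.trans hb1.le) (not_le.mpr h1a)
      have hsub : (c - 1) * b = a - b := by
        rw [ENNReal.sub_mul (fun _ _ => hb), hc, one_mul]
      have h1 : (a - b) ^ α = (c - 1) ^ α * b ^ α := by
        rw [← hsub, mul_pow]
      have h2 : b ^ α ≤ b := pow_le_of_le_one zero_le hb1.le (by omega)
      have h : (a - b) ^ α ≤ b * (max (c - 1) (1 - c)) ^ α := by
        rw [h1, mul_comm]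
        exact mul_le_mul' h2 (pow_le_pow_left' (le_max_left _ _) _)
      exact h.trans (le_trans (self_le_add_left _ _) (self_le_add_right _ _))

private lemma key (α : ℕ) (hα : 1 ≤ α) (a b c d : ℝ≥0∞) (ha : a ≠ ∞) (hb : b ≠ ∞)
    (hc : c * b = a) (hd : d * a = b) :
    (max (a - b) (b - a)) ^ α ≤
      (max (a - 1) (1 - a)) ^ α + b * (max (c - 1) (1 - c)) ^ α
        + (max (b - 1) (1 - b)) ^ α + a * (max (d - 1) (1 - d)) ^ α := by
  rcases le_total b a with hba | hab
  · rw [tsub_eq_zero_of_le hba, max_eq_left zero_le]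
    exact (key_asym α hα a b c hb hc hba).trans (self_le_add_right _ _)
  · rw [tsub_eq_zero_of_le hab, max_eq_right zero_le]
    have := key_asym α hα b a d ha hd hab
    calc (b - a) ^ α ≤ (max (b - 1) (1 - b)) ^ α + a * (max (d - 1) (1 - d)) ^ α
          + (max (a - 1) (1 - a)) ^ α := this
    _ = (max (a - 1) (1 - a)) ^ α + (max (b - 1) (1 - b)) ^ α
          + a * (max (d - 1) (1 - d)) ^ α := by ring
    _ ≤ (max (a - 1) (1 - a)) ^ α + b * (max (c - 1) (1 - c)) ^ α
          + (max (b - 1) (1 - b)) ^ α + a * (max (d - 1) (1 - d)) ^ α :=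
        add_le_add (add_le_add (self_le_add_right _ _) le_rfl) le_rfl

/-- **Ternary-to-binary conversion (Lemma 4)**: the ternary Pearson–Vajda divergence is
bounded by the sum of four binary Pearson–Vajda divergences. -/
theorem ternaryChi_le_four_binaryChi
    {Θ : Type*} [MeasurableSpace Θ]
    (p q r : Measure Θ)
    [IsProbabilityMeasure p] [IsProbabilityMeasure q] [IsProbabilityMeasure r]
    (hpq : p ≪ q) (hqp : q ≪ p) (hpr : p ≪ r) (hrp : r ≪ p) (hqr : q ≪ r) (hrq : r ≪ q)
    (α : ℕ) (hα : 1 ≤ α) :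
    ternaryChi p q r α ≤
      binaryChi p r α + binaryChi p q α + binaryChi q r α + binaryChi q p α := by
  set A := fun θ => p.rnDeriv r θ
  set B := fun θ => q.rnDeriv r θ
  set C := fun θ => p.rnDeriv q θ
  set D := fun θ => q.rnDeriv p θ
  have mA : Measurable A := Measure.measurable_rnDeriv p r
  have mB : Measurable B := Measure.measurable_rnDeriv q r
  have mC : Measurable C := Measure.measurable_rnDeriv p q
  have mD : Measurable D := Measure.measurable_rnDeriv q p
  have mfC : Measurable fun θ => (max (C θ - 1) (1 - C θ)) ^ α :=
    (((mC.sub measurable_const).max (measurable_const.sub mC)).pow_const α)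
  have mfD : Measurable fun θ => (max (D θ - 1) (1 - D θ)) ^ α :=
    (((mD.sub measurable_const).max (measurable_const.sub mD)).pow_const α)
  have mfA : Measurable fun θ => (max (A θ - 1) (1 - A θ)) ^ α :=
    (((mA.sub measurable_const).max (measurable_const.sub mA)).pow_const α)
  have mfB : Measurable fun θ => (max (B θ - 1) (1 - B θ)) ^ α :=
    (((mB.sub measurable_const).max (measurable_const.sub mB)).pow_const α)
  have h2 : binaryChi p q α
      = ∫⁻ θ, B θ * (max (C θ - 1) (1 - C θ)) ^ α ∂r :=
    (lintegral_rnDeriv_mul hqr mfC.aemeasurable).symm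
  have h4 : binaryChi q p α
      = ∫⁻ θ, A θ * (max (D θ - 1) (1 - D θ)) ^ α ∂r :=
    (lintegral_rnDeriv_mul hpr mfD.aemeasurable).symm
  have hmain : ternaryChi p q r α ≤
      ∫⁻ θ, ((max (A θ - 1) (1 - A θ)) ^ α + B θ * (max (C θ - 1) (1 - C θ)) ^ α
        + (max (B θ - 1) (1 - B θ)) ^ α + A θ * (max (D θ - 1) (1 - D θ)) ^ α) ∂r := by
    refine lintegral_mono_ae ?_
    filter_upwards [Measure.rnDeriv_mul_rnDeriv hpq (κ := r),
      Measure.rnDeriv_mul_rnDeriv hqp (κ := r),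
      Measure.rnDeriv_ne_top p r, Measure.rnDeriv_ne_top q r] with θ hcb hda hAtop hBtop
    exact key α hα (A θ) (B θ) (C θ) (D θ) hAtop hBtop hcb hda
  refine hmain.trans (le_of_eq ?_)
  rw [lintegral_add_right _ (by exact mA.mul mfD : Measurable fun θ => A θ * (max (D θ - 1) (1 - D θ)) ^ α), lintegral_add_right _ mfB,
    lintegral_add_right _ (by exact mB.mul mfC : Measurable fun θ => B θ * (max (C θ - 1) (1 - C θ)) ^ α)]
  rw [h2, h4]
  rfl
end

section
/- Let p, q, r be probability measures on a measurable space with p absolutely continuous with respect to q and q absolutely continuous with respect to r. Let u, v ∈ (1,∞) be conjugate exponents with 1/u + 1/v = 1, and let j ≥ 2 be an integer. Then ∫ |dp/dr − dq/dr|^j dr ≤ exp( (j−1)·D_{(j−1)v+1}(q‖r) ) · ( ∫ |dp/dq − 1|^{ju} dq )^{1/u}. -/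
open MeasureTheory ENNReal Real

/-- **Hölder bound on the ternary Pearson–Vajda divergence (Lemma, Appendix F)**:
for conjugate exponents `u, v ∈ (1,∞)` and integers `j ≥ 2`,
`∫ |dp/dr − dq/dr|^j dr ≤ e^{(j−1)·D_{(j−1)v+1}(q‖r)} · (∫ |dp/dq − 1|^{ju} dq)^{1/u}`. -/
theorem ternaryChi_le_holder
    {Θ : Type*} [MeasurableSpace Θ]
    (p q r : Measure Θ)
    [IsProbabilityMeasure p] [IsProbabilityMeasure q] [IsProbabilityMeasure r]
    (hpq : p ≪ q) (hqr : q ≪ r)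
    (u v : ℝ) (hu : 1 < u) (hv : 1 < v) (huv : 1 / u + 1 / v = 1)
    (j : ℕ) (hj : 2 ≤ j) :
    ∫⁻ θ, (max (p.rnDeriv r θ - q.rnDeriv r θ) (q.rnDeriv r θ - p.rnDeriv r θ)) ^ j ∂r ≤
      EReal.exp (((((j : ℝ) - 1) : ℝ) : EReal) * renyiDiv q r (((j : ℝ) - 1) * v + 1)) *
        (∫⁻ θ, (max (p.rnDeriv q θ - 1) (1 - p.rnDeriv q θ)) ^ ((j : ℝ) * u) ∂q) ^
          (1 / u) := by
  set F : Θ → ℝ≥0∞ := fun θ => max (p.rnDeriv q θ - 1) (1 - p.rnDeriv q θ) with hF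
  set G : Θ → ℝ≥0∞ := fun θ => q.rnDeriv r θ with hG
  have hFmeas : Measurable F :=
    ((p.measurable_rnDeriv q).sub measurable_const).max
      (measurable_const.sub (p.measurable_rnDeriv q))
  have hGmeas : Measurable G := q.measurable_rnDeriv r
  have hj1 : (1 : ℕ) ≤ j := le_trans (by norm_num) hj
  have hjR : ((j : ℝ) - 1) ≠ 0 := by
    have : (2 : ℝ) ≤ (j : ℝ) := by exact_mod_cast hj
    linarith
  have hvpos : 0 < v := lt_trans one_pos hv
  have hc : (0:ℝ) ≤ ((j : ℝ) - 1) * v := by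
    have : (2 : ℝ) ≤ (j : ℝ) := by exact_mod_cast hj
    nlinarith
  -- Step A: pointwise a.e. identity
  have hae : ∀ᵐ θ ∂r,
      max (p.rnDeriv r θ - q.rnDeriv r θ) (q.rnDeriv r θ - p.rnDeriv r θ) = F θ * G θ := by
    filter_upwards [Measure.rnDeriv_mul_rnDeriv hpq (κ := r), Measure.rnDeriv_ne_top q r]
      with θ h1 h2
    have hmax : ∀ x y : ℝ≥0∞, max x y * G θ = max (x * G θ) (y * G θ) := by
      intro x y
      exact (Monotone.map_max (f := fun z => z * G θ)
        (fun a b hab => mul_le_mul_left hab _))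
    have hsub : ∀ x y : ℝ≥0∞, (x - y) * G θ = x * G θ - y * G θ := by
      intro x y
      exact ENNReal.sub_mul (fun _ _ => h2)
    rw [← h1]
    simp only [Pi.mul_apply, hF, hG]
    rw [hmax, hsub, hsub, one_mul]
  have hLHS : ∫⁻ θ, (max (p.rnDeriv r θ - q.rnDeriv r θ) (q.rnDeriv r θ - p.rnDeriv r θ)) ^ j ∂r
      = ∫⁻ θ, F θ ^ j * G θ ^ (j - 1) ∂q := by
    rw [lintegral_congr_ae (hae.mono fun θ hθ => by rw [hθ])]
    have hrw : ∀ θ, (F θ * G θ) ^ j = G θ * (F θ ^ j * G θ ^ (j - 1)) := by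
      intro θ
      have : G θ ^ j = G θ ^ (j - 1) * G θ := by
        rw [← pow_succ]; congr 1; omega
      rw [mul_pow, this]; ring
    simp_rw [hrw]
    exact MeasureTheory.lintegral_rnDeriv_mul hqr
      ((hFmeas.pow_const j).mul (hGmeas.pow_const (j-1))).aemeasurable
  -- Hölder
  have hconj : u.HolderConjugate v := Real.holderConjugate_iff.mpr ⟨hu, by simpa [one_div] using huv⟩
  have hHolder := ENNReal.lintegral_mul_le_Lp_mul_Lq q hconj
    (hFmeas.pow_const j).aemeasurable (hGmeas.pow_const (j-1)).aemeasurable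
  -- rewrite the Lp factor
  have hLp : ∫⁻ θ, (F θ ^ j) ^ u ∂q = ∫⁻ θ, F θ ^ ((j : ℝ) * u) ∂q := by
    congr 1; funext θ
    rw [← ENNReal.rpow_natCast (F θ) j, ← ENNReal.rpow_mul]
  -- rewrite the Lq factor and connect to Rényi divergence
  have hLq : ∫⁻ θ, (G θ ^ (j - 1)) ^ v ∂q = ∫⁻ θ, G θ ^ (((j : ℝ) - 1) * v) ∂q := by
    congr 1; funext θ
    rw [← ENNReal.rpow_natCast (G θ) (j - 1), ← ENNReal.rpow_mul]
    congr 2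
    push_cast [Nat.cast_sub hj1]
    ring
  set I : ℝ≥0∞ := ∫⁻ θ, q.rnDeriv r θ ^ (((j : ℝ) - 1) * v + 1) ∂r with hI
  have hIq : ∫⁻ θ, G θ ^ (((j : ℝ) - 1) * v) ∂q = I := by
    rw [hI]
    have hm : Measurable fun θ : Θ => G θ ^ (((j : ℝ) - 1) * v) :=
      ENNReal.continuous_rpow_const.measurable.comp hGmeas
    rw [← MeasureTheory.lintegral_rnDeriv_mul hqr hm.aemeasurable]
    congr 1; funext θ
    rw [ENNReal.rpow_add_of_nonneg _ _ hc zero_le_one, ENNReal.rpow_one]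
    ring
  -- the exponential of the Rényi divergence
  have hexp : EReal.exp (((((j : ℝ) - 1) : ℝ) : EReal) * renyiDiv q r (((j : ℝ) - 1) * v + 1))
      = I ^ (1 / v) := by
    have h1 : (((j : ℝ) - 1) * v + 1 - 1)⁻¹ = (((j : ℝ) - 1) * v)⁻¹ := by ring_nf
    rw [renyiDiv, h1, ← hI]
    rw [← mul_assoc, ← EReal.coe_mul]
    have h2 : ((j : ℝ) - 1) * (((j : ℝ) - 1) * v)⁻¹ = 1 / v := by
      field_simp
    rw [h2, ← ENNReal.log_rpow, ENNReal.exp_log]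
  -- put everything together
  rw [hLHS, hexp]
  calc ∫⁻ θ, F θ ^ j * G θ ^ (j - 1) ∂q
      ≤ (∫⁻ θ, (F θ ^ j) ^ u ∂q) ^ (1 / u) * (∫⁻ θ, (G θ ^ (j - 1)) ^ v ∂q) ^ (1 / v) :=
        hHolder
    _ = I ^ (1 / v) * (∫⁻ θ, F θ ^ ((j : ℝ) * u) ∂q) ^ (1 / u) := by
        rw [hLp, hLq, hIq, mul_comm]
end

section
/- Let μ₁, μ₂ be real numbers, let v > 0, and let α > 1 be a real number. For the Gaussian measures p = N(μ₁, v) and q = N(μ₂, v) on ℝ (with mean μᵢ and variance v), one has ∫ (dp/dq)^α dq = exp( α(α−1)(μ₁−μ₂)² / (2v) ); equivalently, the Rényi divergence satisfies D_α(N(μ₁,v) ‖ N(μ₂,v)) = α(μ₁−μ₂)² / (2v). -/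
open MeasureTheory ProbabilityTheory ENNReal NNReal Real

/-- **Rényi divergence between Gaussians of equal variance**:
`∫ (dN(μ₁,v)/dN(μ₂,v))^α dN(μ₂,v) = exp(α(α−1)(μ₁−μ₂)²/(2v))`; equivalently
`D_α(N(μ₁,v) ‖ N(μ₂,v)) = α(μ₁−μ₂)²/(2v)`. -/
theorem renyiDiv_gaussianReal
    (μ₁ μ₂ : ℝ) (v : ℝ≥0) (hv : 0 < v) (α : ℝ) (hα : 1 < α) :
    (∫⁻ x, (gaussianReal μ₁ v).rnDeriv (gaussianReal μ₂ v) x ^ α ∂(gaussianReal μ₂ v) =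
      ENNReal.ofReal (Real.exp (α * (α - 1) * (μ₁ - μ₂) ^ 2 / (2 * (v : ℝ))))) ∧
    renyiDiv (gaussianReal μ₁ v) (gaussianReal μ₂ v) α =
      ((α * (μ₁ - μ₂) ^ 2 / (2 * (v : ℝ)) : ℝ) : EReal) := by
  have hv' : v ≠ 0 := hv.ne'
  have hvr : (0 : ℝ) < (v : ℝ) := hv
  have hvr' : (v : ℝ) ≠ 0 := hvr.ne'
  have hα1 : α - 1 ≠ 0 := by linarith
  -- the shifted mean
  set m : ℝ := α * μ₁ + (1 - α) * μ₂ with hm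
  set E : ℝ := α * (α - 1) * (μ₁ - μ₂) ^ 2 / (2 * (v : ℝ)) with hE
  -- the Radon-Nikodym derivative is the ratio of densities
  have hrn : (gaussianReal μ₁ v).rnDeriv (gaussianReal μ₂ v)
      =ᵐ[gaussianReal μ₂ v] fun x => gaussianPDF μ₁ v x / gaussianPDF μ₂ v x := by
    refine (Measure.eq_rnDeriv
      ((measurable_gaussianPDF _ _).div (measurable_gaussianPDF _ _))
      (Measure.MutuallySingular.zero_left) ?_).symm
    rw [zero_add, gaussianReal_of_var_ne_zero _ hv', gaussianReal_of_var_ne_zero _ hv',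
      ← withDensity_mul _ (measurable_gaussianPDF _ _)
        ((measurable_gaussianPDF _ _).div (measurable_gaussianPDF _ _))]
    refine withDensity_congr_ae (ae_of_all _ fun x => ?_)
    simp only [Pi.mul_apply, Pi.div_apply]
    exact (ENNReal.mul_div_cancel (gaussianPDF_pos _ hv' x).ne' ENNReal.ofReal_ne_top).symm
  -- pointwise real identity
  have hreal : ∀ x : ℝ,
      gaussianPDFReal μ₂ v x * (gaussianPDFReal μ₁ v x / gaussianPDFReal μ₂ v x) ^ α
        = Real.exp E * gaussianPDFReal m v x := by
    intro x
    have hc : (√(2 * π * (v : ℝ)))⁻¹ ≠ 0 := by positivity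
    simp only [gaussianPDFReal]
    rw [mul_div_mul_left _ _ hc, ← Real.exp_sub, ← Real.exp_mul, mul_assoc, ← Real.exp_add,
      show -(x - μ₂) ^ 2 / (2 * (v : ℝ)) +
          (-(x - μ₁) ^ 2 / (2 * (v : ℝ)) - -(x - μ₂) ^ 2 / (2 * (v : ℝ))) * α
          = E + -(x - m) ^ 2 / (2 * (v : ℝ)) by
        rw [hE, hm]; field_simp; ring,
      Real.exp_add]
    ring
  -- pointwise ENNReal identity
  have hpt : ∀ x : ℝ,
      gaussianPDF μ₂ v x * (gaussianPDF μ₁ v x / gaussianPDF μ₂ v x) ^ α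
        = ENNReal.ofReal (Real.exp E) * gaussianPDF m v x := by
    intro x
    have h1 := gaussianPDFReal_pos μ₁ v x hv'
    have h2 := gaussianPDFReal_pos μ₂ v x hv'
    simp only [gaussianPDF]
    rw [← ENNReal.ofReal_div_of_pos h2, ENNReal.ofReal_rpow_of_pos (by positivity),
      ← ENNReal.ofReal_mul h2.le, ← ENNReal.ofReal_mul (Real.exp_pos _).le, hreal x]
  -- the integral computation
  have key : ∫⁻ x, (gaussianReal μ₁ v).rnDeriv (gaussianReal μ₂ v) x ^ α ∂(gaussianReal μ₂ v)
      = ENNReal.ofReal (Real.exp E) := by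
    rw [lintegral_congr_ae (hrn.mono fun x hx => by rw [hx]),
      gaussianReal_of_var_ne_zero _ hv',
      lintegral_withDensity_eq_lintegral_mul _ (measurable_gaussianPDF _ _)
        (g := fun a => (fun x => gaussianPDF μ₁ v x / gaussianPDF μ₂ v x) a ^ α)
        (((measurable_gaussianPDF _ _).div (measurable_gaussianPDF _ _)).pow_const _)]
    simp only [Pi.mul_apply]
    simp_rw [hpt]
    rw [lintegral_const_mul _ (measurable_gaussianPDF _ _),
      lintegral_gaussianPDF_eq_one _ hv', mul_one]
  refine ⟨key, ?_⟩
  rw [renyiDiv, key, ENNReal.log_ofReal_of_pos (Real.exp_pos _), Real.log_exp,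
    ← EReal.coe_mul]
  congr 1
  rw [hE]
  field_simp
end

section
/- Let α ≥ 2 be an even integer and let v > 0. Then the function μ ↦ ∫ ( dN(μ,v)/dN(0,v) − 1 )^α dN(0,v) is nondecreasing on [0,∞); equivalently, for 0 ≤ μ ≤ μ', Σ_{ℓ=0}^{α} (−1)^{α−ℓ}·C(α,ℓ)·exp( ℓ(ℓ−1)·μ²/(2v) ) ≤ Σ_{ℓ=0}^{α} (−1)^{α−ℓ}·C(α,ℓ)·exp( ℓ(ℓ−1)·μ'²/(2v) ). -/
open MeasureTheory ProbabilityTheory ENNReal NNReal Real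

section Aux

open Finset Polynomial

lemma descFact_cast_succ (ℓ m : ℕ) :
    (ℓ.descFactorial (m+1) : ℝ) = (ℓ.descFactorial m : ℝ) * ((ℓ : ℝ) - m) := by
  rcases lt_trichotomy ℓ m with h | h | h
  · rw [Nat.descFactorial_eq_zero_iff_lt.2 h,
      Nat.descFactorial_eq_zero_iff_lt.2 (h.trans (Nat.lt_succ_self m))]
    simp
  · subst h
    rw [Nat.descFactorial_eq_zero_iff_lt.2 (Nat.lt_succ_self ℓ)]
    simp
  · rw [Nat.descFactorial_succ, Nat.cast_mul, Nat.cast_sub h.le]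
    ring

lemma iter_deriv_sub_one_pow (a m : ℕ) :
    derivative^[m] ((X - 1 : ℝ[X]) ^ a) = C (a.descFactorial m : ℝ) * (X - 1) ^ (a - m) := by
  induction m with
  | zero => simp
  | succ m ih =>
    rw [Function.iterate_succ_apply', ih, derivative_C_mul, derivative_pow]
    have hd : derivative (X - 1 : ℝ[X]) = 1 := by simp
    rw [hd, mul_one, descFact_cast_succ a m]
    rcases lt_trichotomy a m with h | h | h
    · rw [Nat.descFactorial_eq_zero_iff_lt.2 h]
      simp
    · subst h
      simp
    · have h1 : a - m - 1 = a - (m+1) := by omega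
      rw [h1, Nat.cast_sub h.le, C_mul]
      ring

lemma sub_one_pow_expand (a : ℕ) :
    (X - 1 : ℝ[X]) ^ a
      = ∑ ℓ ∈ range (a+1), C ((-1:ℝ)^(a-ℓ) * (a.choose ℓ : ℝ)) * X ^ ℓ := by
  rw [sub_pow]
  refine Finset.sum_congr rfl fun ℓ hℓ => ?_
  rw [Finset.mem_range] at hℓ
  have hpar : ((-1 : ℝ[X])) ^ (ℓ + a) = (-1) ^ (a - ℓ) := by
    have : ℓ + a = (a - ℓ) + 2 * ℓ := by omega
    rw [this, pow_add]
    simp [pow_mul]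
  rw [hpar]
  push_cast
  simp [map_mul, map_pow]
  ring

lemma delta_descFactorial (a m : ℕ) :
    ∑ ℓ ∈ range (a+1), (-1:ℝ)^(a-ℓ) * (a.choose ℓ : ℝ) * (ℓ.descFactorial m : ℝ)
      = if m = a then (a.factorial : ℝ) else 0 := by
  have key : Polynomial.eval (1:ℝ) (derivative^[m] ((X-1:ℝ[X])^a))
      = ∑ ℓ ∈ range (a+1), (-1:ℝ)^(a-ℓ) * (a.choose ℓ : ℝ) * (ℓ.descFactorial m : ℝ) := by
    rw [sub_one_pow_expand, Polynomial.iterate_derivative_sum]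
    rw [Polynomial.eval_finset_sum]
    refine Finset.sum_congr rfl fun ℓ _ => ?_
    rw [Polynomial.iterate_derivative_C_mul, Polynomial.iterate_derivative_X_pow_eq_natCast_mul]
    simp [mul_assoc]
  rw [← key, iter_deriv_sub_one_pow]
  rcases lt_trichotomy m a with h | h | h
  · rw [if_neg h.ne]
    have : a - m ≠ 0 := by omega
    simp [zero_pow this]
  · subst h
    simp [Nat.descFactorial_self]
  · rw [if_neg h.ne', Nat.descFactorial_eq_zero_iff_lt.2 h]
    simp

lemma descFact_mul_quad (ℓ m : ℕ) :
    (ℓ.descFactorial m : ℝ) * ((ℓ:ℝ) * ((ℓ:ℝ)-1))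
      = (ℓ.descFactorial (m+2) : ℝ) + (2*(m:ℝ)) * (ℓ.descFactorial (m+1) : ℝ)
        + ((m:ℝ)*((m:ℝ)-1)) * (ℓ.descFactorial m : ℝ) := by
  rw [show m + 2 = (m+1)+1 from rfl, descFact_cast_succ ℓ (m+1), descFact_cast_succ ℓ m]
  push_cast
  ring

inductive Cone : (ℕ → ℝ) → Prop
  | base (m : ℕ) : Cone (fun ℓ => (ℓ.descFactorial m : ℝ))
  | add {f g} : Cone f → Cone g → Cone (fun ℓ => f ℓ + g ℓ)
  | smul {f} (c : ℝ) (hc : 0 ≤ c) : Cone f → Cone (fun ℓ => c * f ℓ)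

lemma cone_nonneg {f : ℕ → ℝ} (hf : Cone f) (a : ℕ) :
    0 ≤ ∑ ℓ ∈ range (a+1), (-1:ℝ)^(a-ℓ) * (a.choose ℓ : ℝ) * f ℓ := by
  induction hf with
  | base m =>
    rw [delta_descFactorial]
    split <;> positivity
  | add hf hg ihf ihg =>
    simp only [mul_add]
    rw [Finset.sum_add_distrib]
    exact add_nonneg ihf ihg
  | smul c hc hf ih =>
    calc (0:ℝ) ≤ c * ∑ ℓ ∈ range (a+1), (-1:ℝ)^(a-ℓ) * (a.choose ℓ : ℝ) * _ :=
          mul_nonneg hc ih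
      _ = _ := by rw [Finset.mul_sum]; exact Finset.sum_congr rfl fun ℓ _ => by ring

lemma cone_mul_quad {f : ℕ → ℝ} (hf : Cone f) :
    Cone (fun ℓ => f ℓ * ((ℓ:ℝ) * ((ℓ:ℝ)-1))) := by
  induction hf with
  | base m =>
    have he : (fun ℓ : ℕ => (ℓ.descFactorial m : ℝ) * ((ℓ:ℝ) * ((ℓ:ℝ)-1)))
        = fun ℓ : ℕ => (ℓ.descFactorial (m+2) : ℝ)
          + ((2*(m:ℝ)) * (ℓ.descFactorial (m+1) : ℝ)
            + ((m:ℝ)*((m:ℝ)-1)) * (ℓ.descFactorial m : ℝ)) := by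
      funext ℓ; rw [descFact_mul_quad]; ring
    rw [he]
    have hm : (0:ℝ) ≤ (m:ℝ)*((m:ℝ)-1) := by
      rcases Nat.eq_zero_or_pos m with h | h
      · simp [h]
      · have : (1:ℝ) ≤ (m:ℝ) := by exact_mod_cast h
        nlinarith
    exact Cone.add (Cone.base _)
      (Cone.add (Cone.smul _ (by positivity) (Cone.base _)) (Cone.smul _ hm (Cone.base _)))
  | add hf hg ihf ihg =>
    exact (by
      have := Cone.add ihf ihg
      convert this using 1
      funext ℓ; ring)
  | smul c hc hf ih =>
    exact (by
      have := Cone.smul c hc ih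
      convert this using 1
      funext ℓ; ring)

lemma cone_quad_pow (k : ℕ) : Cone (fun ℓ : ℕ => ((ℓ:ℝ) * ((ℓ:ℝ)-1))^k) := by
  induction k with
  | zero =>
    have : (fun ℓ : ℕ => ((ℓ:ℝ) * ((ℓ:ℝ)-1))^0) = fun ℓ : ℕ => (ℓ.descFactorial 0 : ℝ) := by
      funext ℓ; simp
    rw [this]; exact Cone.base 0
  | succ k ih =>
    have : (fun ℓ : ℕ => ((ℓ:ℝ) * ((ℓ:ℝ)-1))^(k+1))
        = fun ℓ : ℕ => ((ℓ:ℝ) * ((ℓ:ℝ)-1))^k * ((ℓ:ℝ) * ((ℓ:ℝ)-1)) := by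
      funext ℓ; rw [pow_succ]
    rw [this]; exact cone_mul_quad ih

lemma key_nonneg (a k : ℕ) :
    0 ≤ ∑ ℓ ∈ range (a+1), (-1:ℝ)^(a-ℓ) * (a.choose ℓ : ℝ) * ((ℓ:ℝ) * ((ℓ:ℝ)-1))^k :=
  cone_nonneg (cone_quad_pow k) a

lemma exp_tsum' (x : ℝ) : Real.exp x = ∑' k : ℕ, x ^ k / (k.factorial : ℝ) := by
  rw [Real.exp_eq_exp_ℝ, NormedSpace.exp_eq_tsum_div]

lemma sum_exp_mono (a : ℕ) {s s' : ℝ} (hs : 0 ≤ s) (hss : s ≤ s') :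
    ∑ ℓ ∈ range (a+1), (-1:ℝ)^(a-ℓ) * (a.choose ℓ : ℝ) * Real.exp (((ℓ:ℝ)*((ℓ:ℝ)-1)) * s)
      ≤ ∑ ℓ ∈ range (a+1), (-1:ℝ)^(a-ℓ) * (a.choose ℓ : ℝ)
          * Real.exp (((ℓ:ℝ)*((ℓ:ℝ)-1)) * s') := by
  set c : ℕ → ℝ := fun ℓ => (-1:ℝ)^(a-ℓ) * (a.choose ℓ : ℝ) with hc
  set q : ℕ → ℝ := fun ℓ => (ℓ:ℝ)*((ℓ:ℝ)-1) with hq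
  have hq0 : ∀ ℓ, 0 ≤ q ℓ := by
    intro ℓ
    rcases Nat.eq_zero_or_pos ℓ with h | h
    · simp [hq, h]
    · have : (1:ℝ) ≤ (ℓ:ℝ) := by exact_mod_cast h
      simp only [hq]; nlinarith
  have hsummable : ∀ (ℓ : ℕ) (t : ℝ), Summable (fun k : ℕ => c ℓ * (q ℓ ^ k * t ^ k / k.factorial)) := by
    intro ℓ t
    apply Summable.mul_left
    have := Real.summable_pow_div_factorial (q ℓ * t)
    simpa [mul_pow] using this
  have hrepr : ∀ t : ℝ, ∑ ℓ ∈ range (a+1), c ℓ * Real.exp (q ℓ * t)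
      = ∑' k : ℕ, (∑ ℓ ∈ range (a+1), c ℓ * q ℓ ^ k) * t ^ k / (k.factorial : ℝ) := by
    intro t
    have h1 : ∀ ℓ, c ℓ * Real.exp (q ℓ * t)
        = ∑' k : ℕ, c ℓ * (q ℓ ^ k * t ^ k / k.factorial) := by
      intro ℓ
      rw [exp_tsum', ← _root_.tsum_mul_left]
      congr 1; funext k; rw [mul_pow]
    simp_rw [h1]
    rw [← Summable.tsum_finsetSum (fun ℓ _ => hsummable ℓ t)]
    congr 1; funext k
    rw [div_eq_mul_inv, Finset.sum_mul, Finset.sum_mul]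
    refine Finset.sum_congr rfl fun ℓ _ => ?_
    rw [div_eq_mul_inv]; ring
  rw [hrepr s, hrepr s']
  have hd : ∀ k, 0 ≤ ∑ ℓ ∈ range (a+1), c ℓ * q ℓ ^ k := by
    intro k
    have := key_nonneg a k
    simpa [hc, hq, mul_assoc] using this
  have hsum : ∀ t : ℝ, Summable (fun k : ℕ =>
      (∑ ℓ ∈ range (a+1), c ℓ * q ℓ ^ k) * t ^ k / (k.factorial : ℝ)) := by
    intro t
    have : (fun k : ℕ => (∑ ℓ ∈ range (a+1), c ℓ * q ℓ ^ k) * t ^ k / (k.factorial : ℝ))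
        = fun k => ∑ ℓ ∈ range (a+1), c ℓ * (q ℓ ^ k * t ^ k / k.factorial) := by
      funext k
      rw [div_eq_mul_inv, Finset.sum_mul, Finset.sum_mul]
      refine Finset.sum_congr rfl fun ℓ _ => ?_
      rw [div_eq_mul_inv]; ring
    rw [this]
    exact summable_sum fun ℓ _ => hsummable ℓ t
  refine (hsum s).tsum_le_tsum (fun k => ?_) (hsum s')
  have hpow : s ^ k ≤ s' ^ k := pow_le_pow_left₀ hs hss k
  have hdk := hd k
  gcongr

end Aux

section Aux2

open Finset

variable {v : ℝ≥0}

lemma pdf_mul_exp (hv : v ≠ 0) (t x : ℝ) :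
    gaussianPDFReal 0 v x * Real.exp (t * x)
      = Real.exp ((v:ℝ) * t^2 / 2) * gaussianPDFReal ((v:ℝ)*t) v x := by
  have hv' : (0:ℝ) < v := by positivity -- ?
  unfold gaussianPDFReal
  have hv0 : (v:ℝ) ≠ 0 := by positivity
  have h : -(x - 0)^2/(2*(v:ℝ)) + t*x = ((v:ℝ)*t^2/2) + (-(x - (v:ℝ)*t)^2/(2*(v:ℝ))) := by
    field_simp
    ring
  rw [mul_assoc, ← Real.exp_add, h, Real.exp_add]
  ring

lemma gaussian_eq_withDensity (μ : ℝ) (hv : v ≠ 0) :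
    gaussianReal μ v = volume.withDensity
      (fun x => ((gaussianPDFReal μ v x).toNNReal : ℝ≥0∞)) := by
  rw [gaussianReal_of_var_ne_zero μ hv]
  rfl

lemma integrable_pdf_smul (μ : ℝ) (hv : v ≠ 0) {g : ℝ → ℝ} (hg : Measurable g)
    (hig : Integrable (fun x => gaussianPDFReal 0 v x * g x) volume) :
    Integrable g (gaussianReal 0 v) := by
  rw [gaussian_eq_withDensity 0 hv,
    integrable_withDensity_iff_integrable_smul (measurable_gaussianPDFReal 0 v).real_toNNReal]
  · refine hig.congr (Filter.EventuallyEq.of_eq ?_)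
    funext x
    simp [NNReal.smul_def, Real.coe_toNNReal _ (gaussianPDFReal_nonneg 0 v x)]

lemma integral_pdf_smul (hv : v ≠ 0) (g : ℝ → ℝ) :
    ∫ x, g x ∂(gaussianReal 0 v) = ∫ x, gaussianPDFReal 0 v x * g x := by
  rw [gaussian_eq_withDensity 0 hv,
    integral_withDensity_eq_integral_smul (measurable_gaussianPDFReal 0 v).real_toNNReal]
  congr 1
  funext x
  simp [NNReal.smul_def, Real.coe_toNNReal _ (gaussianPDFReal_nonneg 0 v x)]

lemma integrable_exp_mul_gaussian (hv : v ≠ 0) (t : ℝ) :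
    Integrable (fun x => Real.exp (t * x)) (gaussianReal 0 v) := by
  refine integrable_pdf_smul 0 hv ((measurable_const_mul t).exp) ?_
  have : (fun x => gaussianPDFReal 0 v x * Real.exp (t * x))
      = fun x => Real.exp ((v:ℝ) * t^2 / 2) * gaussianPDFReal ((v:ℝ)*t) v x := by
    funext x; exact pdf_mul_exp hv t x
  rw [this]
  exact (integrable_gaussianPDFReal _ _).const_mul _

lemma integral_exp_mul_gaussian (hv : v ≠ 0) (t : ℝ) :
    ∫ x, Real.exp (t * x) ∂(gaussianReal 0 v) = Real.exp ((v:ℝ) * t^2 / 2) := by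
  rw [integral_pdf_smul hv]
  have : (fun x => gaussianPDFReal 0 v x * Real.exp (t * x))
      = fun x => Real.exp ((v:ℝ) * t^2 / 2) * gaussianPDFReal ((v:ℝ)*t) v x := by
    funext x; exact pdf_mul_exp hv t x
  rw [this, MeasureTheory.integral_const_mul, integral_gaussianPDFReal_eq_one _ hv, mul_one]

lemma pdfReal_ratio (μ : ℝ) (hv : v ≠ 0) (x : ℝ) :
    gaussianPDFReal μ v x
      = gaussianPDFReal 0 v x * Real.exp (μ/(v:ℝ) * x - μ^2/(2*(v:ℝ))) := by
  have hv0 : (v:ℝ) ≠ 0 := by positivity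
  unfold gaussianPDFReal
  rw [show (-(x - μ)^2/(2*(v:ℝ))) = (-(x - 0)^2/(2*(v:ℝ))) + (μ/(v:ℝ)*x - μ^2/(2*(v:ℝ))) from by
    field_simp; ring, Real.exp_add]
  ring

lemma gauss_withDensity (μ : ℝ) (hv : v ≠ 0) :
    gaussianReal μ v = (gaussianReal 0 v).withDensity
      (fun x => ENNReal.ofReal (Real.exp (μ/(v:ℝ) * x - μ^2/(2*(v:ℝ))))) := by
  have hmeas : Measurable (fun x : ℝ => ENNReal.ofReal (Real.exp (μ/(v:ℝ) * x - μ^2/(2*(v:ℝ))))) := by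
    exact (((measurable_const_mul _).sub measurable_const).exp).ennreal_ofReal
  rw [gaussianReal_of_var_ne_zero μ hv, gaussianReal_of_var_ne_zero 0 hv,
    ← withDensity_mul _ (measurable_gaussianPDF 0 v) hmeas]
  congr 1
  funext x
  rw [Pi.mul_apply, gaussianPDF, gaussianPDF,
    ← ENNReal.ofReal_mul (gaussianPDFReal_nonneg 0 v x), ← pdfReal_ratio μ hv x]

lemma rnDeriv_gauss_ae (μ : ℝ) (hv : v ≠ 0) :
    (gaussianReal μ v).rnDeriv (gaussianReal 0 v)
      =ᵐ[gaussianReal 0 v]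
        fun x => ENNReal.ofReal (Real.exp (μ/(v:ℝ) * x - μ^2/(2*(v:ℝ)))) := by
  rw [gauss_withDensity μ hv]
  exact Measure.rnDeriv_withDensity _
    ((((measurable_const_mul _).sub measurable_const).exp).ennreal_ofReal)

lemma max_ofReal_sub (a : ℝ) (ha : 0 ≤ a) :
    max (ENNReal.ofReal a - 1) (1 - ENNReal.ofReal a) = ENNReal.ofReal |a - 1| := by
  rcases le_total 1 a with h | h
  · have h0 : (1:ℝ≥0∞) - ENNReal.ofReal a = 0 :=
      tsub_eq_zero_of_le (by simpa using ENNReal.ofReal_le_ofReal h)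
    rw [abs_of_nonneg (by linarith : (0:ℝ) ≤ a - 1), h0, max_eq_left zero_le,
      ENNReal.ofReal_sub _ zero_le_one, ENNReal.ofReal_one]
  · have h0 : ENNReal.ofReal a - 1 = 0 :=
      tsub_eq_zero_of_le (by simpa using ENNReal.ofReal_le_ofReal h)
    rw [abs_of_nonpos (by linarith : a - 1 ≤ 0), neg_sub, h0, max_eq_right zero_le,
      ENNReal.ofReal_sub _ ha, ENNReal.ofReal_one]

lemma lintegral_eq_sum (α : ℕ) (heven : Even α) (μ : ℝ) (hv : v ≠ 0) :
    ∫⁻ x, (max ((gaussianReal μ v).rnDeriv (gaussianReal 0 v) x - 1)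
        (1 - (gaussianReal μ v).rnDeriv (gaussianReal 0 v) x)) ^ α ∂(gaussianReal 0 v)
      = ENNReal.ofReal (∑ ℓ ∈ range (α+1), (-1:ℝ)^(α-ℓ) * (α.choose ℓ:ℝ) *
          Real.exp ((ℓ:ℝ)*((ℓ:ℝ)-1) * μ^2 / (2*(v:ℝ)))) := by
  have hv0 : (v:ℝ) ≠ 0 := by positivity
  set ρ : ℝ → ℝ := fun x => Real.exp (μ/(v:ℝ) * x - μ^2/(2*(v:ℝ))) with hρ
  have hcong : (fun x => (max ((gaussianReal μ v).rnDeriv (gaussianReal 0 v) x - 1)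
        (1 - (gaussianReal μ v).rnDeriv (gaussianReal 0 v) x)) ^ α)
      =ᵐ[gaussianReal 0 v] fun x => ENNReal.ofReal (|ρ x - 1|^α) := by
    filter_upwards [rnDeriv_gauss_ae μ hv] with x hx
    rw [hx, max_ofReal_sub _ (Real.exp_nonneg _), ← ENNReal.ofReal_pow (abs_nonneg _)]
  rw [lintegral_congr_ae hcong]
  have hgh : (fun x => |ρ x - 1|^α)
      = fun x => ∑ ℓ ∈ range (α+1),
          ((-1:ℝ)^(ℓ+α) * (α.choose ℓ:ℝ) * Real.exp (-(ℓ:ℝ)*μ^2/(2*(v:ℝ))))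
            * Real.exp (((ℓ:ℝ)*μ/(v:ℝ)) * x) := by
    funext x
    rw [heven.pow_abs, sub_pow]
    refine Finset.sum_congr rfl fun ℓ _ => ?_
    have hpow : ρ x ^ ℓ = Real.exp (((ℓ:ℝ)*μ/(v:ℝ)) * x) * Real.exp (-(ℓ:ℝ)*μ^2/(2*(v:ℝ))) := by
      rw [hρ, ← Real.exp_nat_mul, ← Real.exp_add]
      congr 1
      field_simp
      ring
    rw [hpow]
    ring
  have hint_each : ∀ ℓ : ℕ, Integrable
      (fun x => ((-1:ℝ)^(ℓ+α) * (α.choose ℓ:ℝ) * Real.exp (-(ℓ:ℝ)*μ^2/(2*(v:ℝ))))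
        * Real.exp (((ℓ:ℝ)*μ/(v:ℝ)) * x)) (gaussianReal 0 v) :=
    fun ℓ => (integrable_exp_mul_gaussian hv _).const_mul _
  have hint : Integrable (fun x => |ρ x - 1|^α) (gaussianReal 0 v) := by
    rw [hgh]
    exact integrable_finset_sum _ fun ℓ _ => hint_each ℓ
  rw [← ofReal_integral_eq_lintegral_ofReal hint
    (Filter.Eventually.of_forall fun x => pow_nonneg (abs_nonneg _) _)]
  congr 1
  rw [hgh, integral_finset_sum _ fun ℓ _ => hint_each ℓ]
  refine Finset.sum_congr rfl fun ℓ hℓ => ?_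
  rw [MeasureTheory.integral_const_mul, integral_exp_mul_gaussian hv]
  rw [mul_assoc, ← Real.exp_add]
  have hsign : (-1:ℝ)^(ℓ+α) = (-1:ℝ)^(α-ℓ) := by
    rw [Finset.mem_range] at hℓ
    rw [show ℓ + α = (α - ℓ) + 2*ℓ by omega, pow_add]
    simp [pow_mul]
  rw [hsign]
  congr 1
  field_simp
  ring

lemma sum_le_sum_of_le (α : ℕ) (v : ℝ≥0) (hv : 0 < v) :
    ∀ μ μ' : ℝ, 0 ≤ μ → μ ≤ μ' →
      ∑ ℓ ∈ Finset.range (α + 1), (-1 : ℝ) ^ (α - ℓ) * (α.choose ℓ : ℝ) *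
          Real.exp ((ℓ : ℝ) * ((ℓ : ℝ) - 1) * μ ^ 2 / (2 * (v : ℝ))) ≤
        ∑ ℓ ∈ Finset.range (α + 1), (-1 : ℝ) ^ (α - ℓ) * (α.choose ℓ : ℝ) *
          Real.exp ((ℓ : ℝ) * ((ℓ : ℝ) - 1) * μ' ^ 2 / (2 * (v : ℝ))) := by
  intro μ μ' hμ hle
  have hv0 : (0:ℝ) < (v:ℝ) := hv
  have hs : 0 ≤ μ^2 / (2*(v:ℝ)) := by positivity
  have hss : μ^2 / (2*(v:ℝ)) ≤ μ'^2 / (2*(v:ℝ)) := by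
    have := pow_le_pow_left₀ hμ hle 2
    gcongr
  have := sum_exp_mono α hs hss
  simpa [mul_div_assoc] using this

end Aux2

/-- **Monotonicity of the even-order Pearson–Vajda divergence for Gaussians (appears in
Lemma 8, self-consistency of the Gaussian mechanism)**: for even `α ≥ 2` the map
`μ ↦ ∫ (dN(μ,v)/dN(0,v) − 1)^α dN(0,v)` is nondecreasing on `[0,∞)`; equivalently the
alternating binomial sums `Σ_ℓ (−1)^{α−ℓ} C(α,ℓ) e^{ℓ(ℓ−1)μ²/(2v)}` are nondecreasing
in `μ ≥ 0`. -/
theorem gaussian_chi_monotone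
    (α : ℕ) (hα : 2 ≤ α) (heven : Even α) (v : ℝ≥0) (hv : 0 < v) :
    MonotoneOn (fun μ : ℝ =>
      ∫⁻ x, (max ((gaussianReal μ v).rnDeriv (gaussianReal 0 v) x - 1)
          (1 - (gaussianReal μ v).rnDeriv (gaussianReal 0 v) x)) ^ α
        ∂(gaussianReal 0 v)) (Set.Ici 0) ∧
    ∀ μ μ' : ℝ, 0 ≤ μ → μ ≤ μ' →
      ∑ ℓ ∈ Finset.range (α + 1), (-1 : ℝ) ^ (α - ℓ) * (α.choose ℓ : ℝ) *
          Real.exp ((ℓ : ℝ) * ((ℓ : ℝ) - 1) * μ ^ 2 / (2 * (v : ℝ))) ≤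
        ∑ ℓ ∈ Finset.range (α + 1), (-1 : ℝ) ^ (α - ℓ) * (α.choose ℓ : ℝ) *
          Real.exp ((ℓ : ℝ) * ((ℓ : ℝ) - 1) * μ' ^ 2 / (2 * (v : ℝ))) := by
  refine ⟨?_, sum_le_sum_of_le α v hv⟩
  intro μ hμ μ' hμ' hle
  simp only
  rw [lintegral_eq_sum α heven μ hv.ne', lintegral_eq_sum α heven μ' hv.ne']
  exact ENNReal.ofReal_le_ofReal (sum_le_sum_of_le α v hv μ μ' hμ hle)
end

section
/- Let E be a real normed vector space, A : E → ℝ a function, η₁, η₂ ∈ E, and Δ, κ, L > 0 with ‖η₁ − η₂‖ ≤ Δ ≤ κ. Suppose there is a continuous linear functional g : E → ℝ such that for every η ∈ E with ‖η − η₁‖ ≤ κ one has A(η) ≤ A(η₁) + g(η − η₁) + (L/2)·‖η − η₁‖². Then for every real α with 1 < α ≤ κ/Δ + 1: (1/(α−1)) · ( A(α·η₁ + (1−α)·η₂) − α·A(η₁) − (1−α)·A(η₂) ) ≤ α·L·Δ²/2. -/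
/-- **RDP of exponential family mechanisms via local smoothness (Proposition 5,
smoothness part)**: if the log-partition function `A` satisfies a local quadratic upper
bound with constant `L` within radius `κ` around `η₁` (with linear part a continuous
linear functional `g`), and `‖η₁ − η₂‖ ≤ Δ ≤ κ`, then for all `1 < α ≤ κ/Δ + 1` the
Rényi-divergence expression is bounded by `αLΔ²/2`. -/
theorem expFamily_renyi_le_of_smooth
    {E : Type*} [NormedAddCommGroup E] [NormedSpace ℝ E]
    (A : E → ℝ) (η₁ η₂ : E) (Δ κ L : ℝ)
    (hΔ : 0 < Δ) (hκ : 0 < κ) (hL : 0 < L)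
    (hdist : ‖η₁ - η₂‖ ≤ Δ) (hΔκ : Δ ≤ κ)
    (g : E →L[ℝ] ℝ)
    (hSmooth : ∀ η : E, ‖η - η₁‖ ≤ κ →
      A η ≤ A η₁ + g (η - η₁) + L / 2 * ‖η - η₁‖ ^ 2)
    (α : ℝ) (hα : 1 < α) (hακ : α ≤ κ / Δ + 1) :
    (α - 1)⁻¹ * (A (α • η₁ + (1 - α) • η₂) - α * A η₁ - (1 - α) * A η₂) ≤
      α * L * Δ ^ 2 / 2 := by
  have hα' : 0 < α - 1 := by linarith
  set d := ‖η₁ - η₂‖ with hd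
  have hd0 : 0 ≤ d := norm_nonneg _
  have h1 : α • η₁ + (1 - α) • η₂ - η₁ = (α - 1) • (η₁ - η₂) := by
    module
  have hnorm1 : ‖α • η₁ + (1 - α) • η₂ - η₁‖ = (α - 1) * d := by
    rw [h1, norm_smul, Real.norm_eq_abs, abs_of_pos hα']
  have hle1 : (α - 1) * d ≤ κ := by
    have hαΔ : (α - 1) * Δ ≤ κ := by
      have : α - 1 ≤ κ / Δ := by linarith
      calc (α - 1) * Δ ≤ (κ / Δ) * Δ := by nlinarith
        _ = κ := by field_simp
    calc (α - 1) * d ≤ (α - 1) * Δ := by nlinarith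
      _ ≤ κ := hαΔ
  have hs1 := hSmooth (α • η₁ + (1 - α) • η₂) (by rw [hnorm1]; exact hle1)
  rw [hnorm1, h1] at hs1
  have hg1 : g ((α - 1) • (η₁ - η₂)) = (α - 1) * g (η₁ - η₂) := by simp
  rw [hg1] at hs1
  have h2 : η₂ - η₁ = -(η₁ - η₂) := by abel
  have hs2 := hSmooth η₂ (by rw [h2, norm_neg]; exact le_trans hdist hΔκ)
  rw [h2, norm_neg, map_neg, ← hd] at hs2
  rw [inv_mul_le_iff₀ hα']
  have hdΔ : d ^ 2 ≤ Δ ^ 2 := pow_le_pow_left₀ hd0 hdist 2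
  nlinarith [mul_le_mul_of_nonneg_left hs2 hα'.le, sq_nonneg d, sq_nonneg (α - 1),
    mul_pos hα' hL, mul_nonneg (mul_nonneg (mul_pos hα' hL).le (by linarith : (0:ℝ) ≤ α))
      (by linarith : (0:ℝ) ≤ Δ ^ 2 - d ^ 2)]
end

section
/- Let p, q, r be probability measures on a measurable space with p and q absolutely continuous with respect to r, and let j ≥ 2 be an integer. (i) ∫ |dp/dr − dq/dr|^j dr ≤ exp((j−1)·D_j(p‖r)) + exp((j−1)·D_j(q‖r)). (ii) If, moreover, e^{−ε}·(dq/dr) ≤ dp/dr ≤ e^{ε}·(dq/dr) holds r-almost everywhere for some ε ≥ 0, then ∫ |dp/dr − dq/dr|^j dr ≤ (e^{ε} − 1)^j · exp((j−1)·D_j(q‖r)). -/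
open MeasureTheory ENNReal Real

lemma exp_renyi_aux {Θ : Type*} [MeasurableSpace Θ]
    (p r : Measure Θ) {j : ℕ} (hj : 2 ≤ j) :
    EReal.exp (((((j : ℝ) - 1) : ℝ) : EReal) * renyiDiv p r (j : ℝ)) =
      ∫⁻ θ, p.rnDeriv r θ ^ (j : ℝ) ∂r := by
  have hc : ((j : ℝ) - 1) ≠ 0 := by
    have : (2 : ℝ) ≤ (j : ℝ) := by exact_mod_cast hj
    linarith
  rw [renyiDiv, ← mul_assoc, ← EReal.coe_mul, mul_inv_cancel₀ hc, EReal.coe_one, one_mul,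
    ENNReal.exp_log]

/-- **Bounding the ternary Pearson–Vajda divergence by Rényi divergences**:
(i) `∫ |dp/dr − dq/dr|^j dr ≤ e^{(j−1)D_j(p‖r)} + e^{(j−1)D_j(q‖r)}`, and
(ii) under the multiplicative bound `e^{−ε}·dq/dr ≤ dp/dr ≤ e^{ε}·dq/dr` (r-a.e.),
`∫ |dp/dr − dq/dr|^j dr ≤ (e^{ε}−1)^j · e^{(j−1)D_j(q‖r)}`. -/
theorem ternaryChi_le_renyi_bounds
    {Θ : Type*} [MeasurableSpace Θ]
    (p q r : Measure Θ)
    [IsProbabilityMeasure p] [IsProbabilityMeasure q] [IsProbabilityMeasure r]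
    (hpr : p ≪ r) (hqr : q ≪ r)
    (j : ℕ) (hj : 2 ≤ j) :
    (∫⁻ θ, (max (p.rnDeriv r θ - q.rnDeriv r θ) (q.rnDeriv r θ - p.rnDeriv r θ)) ^ j ∂r ≤
      EReal.exp (((((j : ℝ) - 1) : ℝ) : EReal) * renyiDiv p r (j : ℝ)) +
        EReal.exp (((((j : ℝ) - 1) : ℝ) : EReal) * renyiDiv q r (j : ℝ))) ∧
    (∀ ε : ℝ, 0 ≤ ε →
      (∀ᵐ θ ∂r, ENNReal.ofReal (Real.exp (-ε)) * q.rnDeriv r θ ≤ p.rnDeriv r θ ∧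
        p.rnDeriv r θ ≤ ENNReal.ofReal (Real.exp ε) * q.rnDeriv r θ) →
      ∫⁻ θ, (max (p.rnDeriv r θ - q.rnDeriv r θ)
          (q.rnDeriv r θ - p.rnDeriv r θ)) ^ j ∂r ≤
        ENNReal.ofReal ((Real.exp ε - 1) ^ j) *
          EReal.exp (((((j : ℝ) - 1) : ℝ) : EReal) * renyiDiv q r (j : ℝ))) := by
  set f := p.rnDeriv r with hf
  set g := q.rnDeriv r with hg
  constructor
  · rw [exp_renyi_aux p r hj, exp_renyi_aux q r hj]
    calc ∫⁻ θ, (max (f θ - g θ) (g θ - f θ)) ^ j ∂r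
        ≤ ∫⁻ θ, (f θ ^ (j : ℝ) + g θ ^ (j : ℝ)) ∂r := by
          refine lintegral_mono fun θ => ?_
          have h1 : max (f θ - g θ) (g θ - f θ) ≤ max (f θ) (g θ) :=
            max_le_max tsub_le_self tsub_le_self
          calc (max (f θ - g θ) (g θ - f θ)) ^ j ≤ (max (f θ) (g θ)) ^ j :=
                pow_le_pow_left' h1 j
            _ ≤ f θ ^ (j : ℝ) + g θ ^ (j : ℝ) := by
                rcases max_cases (f θ) (g θ) with ⟨h, _⟩ | ⟨h, _⟩ <;>
                  rw [h, ENNReal.rpow_natCast, ENNReal.rpow_natCast]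
                · exact le_self_add
                · exact le_add_self
      _ = (∫⁻ θ, f θ ^ (j : ℝ) ∂r) + ∫⁻ θ, g θ ^ (j : ℝ) ∂r := by
          refine lintegral_add_left ?_ _
          exact (Measure.measurable_rnDeriv p r).pow_const _
  · intro ε hε hae
    rw [exp_renyi_aux q r hj]
    have hexp1 : (1 : ℝ) ≤ Real.exp ε := Real.one_le_exp hε
    have key : ∀ᵐ θ ∂r, (max (f θ - g θ) (g θ - f θ)) ^ j ≤
        ENNReal.ofReal ((Real.exp ε - 1) ^ j) * g θ ^ (j : ℝ) := by
      filter_upwards [hae, q.rnDeriv_lt_top r] with θ hθ hgt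
      have hgne : g θ ≠ ⊤ := hgt.ne
      have h1 : f θ - g θ ≤ ENNReal.ofReal (Real.exp ε - 1) * g θ := by
        have : f θ - g θ ≤ ENNReal.ofReal (Real.exp ε) * g θ - g θ :=
          tsub_le_tsub_right hθ.2 _
        refine this.trans_eq ?_
        rw [ENNReal.ofReal_sub _ zero_le_one, ENNReal.ofReal_one, ENNReal.sub_mul, one_mul]
        intro _ _; exact hgne
      have h2 : g θ - f θ ≤ ENNReal.ofReal (Real.exp ε - 1) * g θ := by
        have hle : 1 - Real.exp (-ε) ≤ Real.exp ε - 1 := by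
          have e1 := Real.add_one_le_exp ε
          have e2 := Real.add_one_le_exp (-ε)
          linarith
        have : g θ - f θ ≤ g θ - ENNReal.ofReal (Real.exp (-ε)) * g θ :=
          tsub_le_tsub_left hθ.1 _
        refine this.trans ?_
        have heq : g θ - ENNReal.ofReal (Real.exp (-ε)) * g θ =
            ENNReal.ofReal (1 - Real.exp (-ε)) * g θ := by
          rw [ENNReal.ofReal_sub _ (Real.exp_pos _).le, ENNReal.ofReal_one, ENNReal.sub_mul,
            one_mul]
          intro _ _; exact hgne
        rw [heq]
        exact mul_le_mul_left (ENNReal.ofReal_le_ofReal hle) _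
      have hmax : max (f θ - g θ) (g θ - f θ) ≤ ENNReal.ofReal (Real.exp ε - 1) * g θ :=
        max_le h1 h2
      calc (max (f θ - g θ) (g θ - f θ)) ^ j
          ≤ (ENNReal.ofReal (Real.exp ε - 1) * g θ) ^ j := pow_le_pow_left' hmax j
        _ = ENNReal.ofReal ((Real.exp ε - 1) ^ j) * g θ ^ (j : ℝ) := by
            rw [mul_pow, ← ENNReal.ofReal_pow (by linarith), ENNReal.rpow_natCast]
    calc ∫⁻ θ, (max (f θ - g θ) (g θ - f θ)) ^ j ∂r
        ≤ ∫⁻ θ, ENNReal.ofReal ((Real.exp ε - 1) ^ j) * g θ ^ (j : ℝ) ∂r :=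
          lintegral_mono_ae key
      _ = ENNReal.ofReal ((Real.exp ε - 1) ^ j) * ∫⁻ θ, g θ ^ (j : ℝ) ∂r :=
          lintegral_const_mul' _ _ ENNReal.ofReal_ne_top
end
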